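/- Let T be a contraction on a Hilbert space H (‖T‖ ≤ 1). Define τ : ℤ → B(H) by τ(k) = T^k for k ≥ 0 and τ(k) = (T*)^{-k} for k < 0. Then τ is positive definite: for any finite families of vectors ξ_1,…,ξ_m in H and integers k_1,…,k_m, the matrix (⟨τ(k_i − k_j)ξ_j, ξ_i⟩)_{i,j} is positive semidefinite, i.e., ∑_{i,j} ⟨τ(k_i − k_j)ξ_j, ξ_i⟩ ≥ 0. -/

import Mathlib

noncomputable section

open ContinuousLinearMap
open scoped ComplexOrder

set_option maxHeartbeats 1000000

variable {H : Type*} [NormedAddCommGroup H] [InnerProductSpace ℂ H] [CompleteSpace H]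

/-- `τ(k) = T^k` for `k ≥ 0`, `τ(k) = (T*)^(-k)` for `k < 0`. -/
noncomputable def tauPow (T : H →L[ℂ] H) : ℤ → (H →L[ℂ] H) := fun d =>
  if 0 ≤ d then T ^ d.toNat else (ContinuousLinearMap.adjoint T) ^ (-d).toNat

lemma pair_identity (T : H →L[ℂ] H) (a b : ℕ) (ξ η : H) :
    (inner ℂ ((tauPow T ((a:ℤ) - b)) ξ) η : ℂ) =
      inner ℂ ((T ^ a) ξ) ((T ^ b) η) +
        ∑ s ∈ Finset.range (min a b),
          (inner ℂ (((1 - (ContinuousLinearMap.adjoint T) * T)) ((T ^ (a - (s+1))) ξ))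
            ((T ^ (b - (s+1))) η) : ℂ) := by
  have key : ∀ s ∈ Finset.range (min a b),
      (inner ℂ (((1 - (ContinuousLinearMap.adjoint T) * T)) ((T ^ (a - (s+1))) ξ))
          ((T ^ (b - (s+1))) η) : ℂ)
        = (fun s : ℕ => (inner ℂ ((T ^ (a - s)) ξ) ((T ^ (b - s)) η) : ℂ)) (s+1)
          - (fun s : ℕ => (inner ℂ ((T ^ (a - s)) ξ) ((T ^ (b - s)) η) : ℂ)) s := by
    intro s hs
    simp only [Finset.mem_range, lt_min_iff] at hs
    have ha : a - s = (a - (s+1)) + 1 := by omega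
    have hb : b - s = (b - (s+1)) + 1 := by omega
    simp only [sub_apply, one_apply_eq_self, mul_apply_eq_comp, inner_sub_left]
    rw [ContinuousLinearMap.adjoint_inner_left, ha, hb, pow_succ', mul_apply_eq_comp, pow_succ', mul_apply_eq_comp]
  rw [Finset.sum_congr rfl key, Finset.sum_range_sub
    (fun s : ℕ => (inner ℂ ((T ^ (a - s)) ξ) ((T ^ (b - s)) η) : ℂ))]
  simp only [Nat.sub_zero]
  rw [add_sub_cancel]
  rcases le_total b a with h | h
  · have h1 : (0:ℤ) ≤ (a:ℤ) - b := by omega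
    have h2 : ((a:ℤ) - b).toNat = a - b := by omega
    simp [tauPow, h, h1, h2, min_eq_right h, Nat.sub_self]
  · have h1 : min a b = a := min_eq_left h
    rcases eq_or_lt_of_le h with rfl | hlt
    · have : (0:ℤ) ≤ (a:ℤ) - a := by omega
      simp [tauPow, this, Nat.sub_self]
    · have h2 : ¬ (0:ℤ) ≤ (a:ℤ) - b := by omega
      have h3 : (-((a:ℤ) - b)).toNat = b - a := by omega
      simp only [tauPow, h2, if_false, h3, h1, Nat.sub_self, pow_zero, one_apply_eq_self]
      rw [← ContinuousLinearMap.star_eq_adjoint, ← star_pow,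
        ContinuousLinearMap.star_eq_adjoint, ContinuousLinearMap.adjoint_inner_left]

lemma sum_comm3 {α β : Type*} (R1 R2 : Finset α) (R3 : Finset β) (F : α → α → β → ℂ) :
    ∑ i ∈ R1, ∑ j ∈ R2, ∑ s ∈ R3, F i j s = ∑ s ∈ R3, ∑ i ∈ R1, ∑ j ∈ R2, F i j s := by
  calc ∑ i ∈ R1, ∑ j ∈ R2, ∑ s ∈ R3, F i j s
      = ∑ i ∈ R1, ∑ s ∈ R3, ∑ j ∈ R2, F i j s :=
        Finset.sum_congr rfl fun i _ => Finset.sum_comm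
    _ = ∑ s ∈ R3, ∑ i ∈ R1, ∑ j ∈ R2, F i j s := Finset.sum_comm

omit [CompleteSpace H] in
lemma inner_self_nonneg'' (x : H) : 0 ≤ (inner ℂ x x : ℂ) := by
  refine RCLike.nonneg_iff.2 ⟨inner_self_nonneg, ?_⟩
  exact inner_self_im x

lemma defect_nonneg (T : H →L[ℂ] H) (hT : ‖T‖ ≤ 1) (v : H) :
    0 ≤ (inner ℂ ((1 - (ContinuousLinearMap.adjoint T) * T) v) v : ℂ) := by
  have : (inner ℂ ((1 - (ContinuousLinearMap.adjoint T) * T) v) v : ℂ)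
      = ((‖v‖^2 - ‖T v‖^2 : ℝ) : ℂ) := by
    rw [sub_apply, one_apply_eq_self, mul_apply_eq_comp, inner_sub_left,
      ContinuousLinearMap.adjoint_inner_left, inner_self_eq_norm_sq_to_K,
      inner_self_eq_norm_sq_to_K]
    norm_cast
  rw [this]
  have h1 : ‖T v‖ ≤ ‖v‖ := by
    calc ‖T v‖ ≤ ‖T‖ * ‖v‖ := T.le_opNorm v
    _ ≤ 1 * ‖v‖ := by gcongr
    _ = ‖v‖ := one_mul _
  have : (0:ℝ) ≤ ‖v‖^2 - ‖T v‖^2 := by nlinarith [norm_nonneg (T v), norm_nonneg v]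
  exact_mod_cast this

/-- If `T` is a contraction then `τ` is a positive definite operator-valued function:
all the finite quadratic forms `∑ i j, ⟪τ(k i - k j) (ξ j), ξ i⟫` are real and
nonnegative (nonnegativity in the partial order of `ℂ`). -/
theorem contraction_tauPow_posDef
    (T : H →L[ℂ] H) (hT : ‖T‖ ≤ 1)
    (m : ℕ) (ξ : Fin m → H) (k : Fin m → ℤ) :
    0 ≤ ∑ i, ∑ j, (inner ℂ ((tauPow T (k i - k j)) (ξ j)) (ξ i) : ℂ) := by
  classical
  set A : H →L[ℂ] H := 1 - (ContinuousLinearMap.adjoint T) * T with hA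
  set S : ℤ := ∑ i, |k i| with hS
  have hkS : ∀ i, k i ≤ S := by
    intro i
    calc k i ≤ |k i| := le_abs_self _
    _ ≤ S := Finset.single_le_sum (fun j _ => abs_nonneg (k j)) (Finset.mem_univ i)
  set n : Fin m → ℕ := fun i => (S - k i).toNat with hn
  have hnz : ∀ i, (n i : ℤ) = S - k i := fun i => Int.toNat_of_nonneg (by have := hkS i; omega)
  have hdiff : ∀ i j, k i - k j = (n j : ℤ) - n i := by
    intro i j; rw [hnz, hnz]; ring
  set N : ℕ := ∑ i, n i with hN
  have hnN : ∀ i, n i ≤ N := fun i =>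
    Finset.single_le_sum (fun j _ => Nat.zero_le _) (Finset.mem_univ i)
  have hterm : ∀ i j, (inner ℂ ((tauPow T (k i - k j)) (ξ j)) (ξ i) : ℂ) =
      inner ℂ ((T ^ n j) (ξ j)) ((T ^ n i) (ξ i)) +
        ∑ s ∈ Finset.range N,
          (inner ℂ (A ((if s < n j then (T ^ (n j - (s+1))) (ξ j) else 0)))
            ((if s < n i then (T ^ (n i - (s+1))) (ξ i) else 0)) : ℂ) := by
    intro i j
    rw [hdiff i j, pair_identity T (n j) (n i) (ξ j) (ξ i)]
    congr 1
    rw [show Finset.range (min (n j) (n i))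
        = Finset.filter (fun s => s < n j ∧ s < n i) (Finset.range N) by
      ext s; simp only [Finset.mem_range, Finset.mem_filter, lt_min_iff]
      constructor
      · intro h; exact ⟨lt_of_lt_of_le h.1 (hnN j), h⟩
      · intro h; exact h.2]
    rw [Finset.sum_filter]
    refine Finset.sum_congr rfl (fun s _ => ?_)
    by_cases h1 : s < n j <;> by_cases h2 : s < n i <;>
      simp [h1, h2, hA, inner_zero_left, inner_zero_right]
  have hmain : ∑ i, ∑ j, (inner ℂ ((tauPow T (k i - k j)) (ξ j)) (ξ i) : ℂ)
      = (inner ℂ (∑ i, (T ^ n i) (ξ i)) (∑ i, (T ^ n i) (ξ i)) : ℂ)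
        + ∑ s ∈ Finset.range N,
          (inner ℂ (A (∑ j, if s < n j then (T ^ (n j - (s+1))) (ξ j) else 0))
            (∑ i, if s < n i then (T ^ (n i - (s+1))) (ξ i) else 0) : ℂ) := by
    simp only [hterm, Finset.sum_add_distrib]
    congr 1
    · simp only [sum_inner, inner_sum]
    · simp only [map_sum, sum_inner, inner_sum]
      exact sum_comm3 Finset.univ Finset.univ (Finset.range N)
        (fun i j s => (inner ℂ (A (if s < n j then (T ^ (n j - (s+1))) (ξ j) else 0))
          (if s < n i then (T ^ (n i - (s+1))) (ξ i) else 0) : ℂ))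
  rw [hmain]
  apply add_nonneg
  · exact inner_self_nonneg'' _
  · exact Finset.sum_nonneg (fun s _ => defect_nonneg T hT _)

end
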